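/- arXiv:1311.3587 — 3 statements merged into one kernel-verified Lean document; each statement's English description precedes it below -/
import Mathlib

section
/- For all real numbers a, b and all real p ≥ 2, one has |a + b|^p ≥ |a|^p + |b|^p - p·|a|^(p-1)·|b| - p·|a|·|b|^(p-1). -/
-- key lemma: tangent line bound (x - y)^p ≥ x^p - p * x^(p-1) * y for 0 ≤ y ≤ x
lemma key_tangent {x y p : ℝ} (hy : 0 ≤ y) (hxy : y ≤ x) (hp : 1 ≤ p) :
    x ^ p - p * x ^ (p - 1) * y ≤ (x - y) ^ p := by
  have hx : 0 ≤ x := hy.trans hxy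
  rcases eq_or_lt_of_le hx with h0 | h0
  · have hy0 : y = 0 := le_antisymm (hxy.trans h0.symm.le) hy
    simp [← h0, hy0]
  · have hs : (-1 : ℝ) ≤ -y / x := by
      rw [neg_div, neg_le_neg_iff, div_le_one h0]; exact hxy
    have hb := one_add_mul_self_le_rpow_one_add hs hp
    have h1 : (1 : ℝ) + -y / x = (x - y) / x := by field_simp; ring
    rw [h1] at hb
    have hb2 : (1 + p * (-y / x)) * x ^ p ≤ ((x - y) / x) ^ p * x ^ p :=
      mul_le_mul_of_nonneg_right hb (Real.rpow_nonneg hx _)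
    have hdiv : ((x - y) / x) ^ p * x ^ p = (x - y) ^ p := by
      rw [Real.div_rpow (by linarith) hx, div_mul_cancel₀]
      exact (Real.rpow_pos_of_pos h0 p).ne'
    rw [hdiv] at hb2
    have hpm1 : x ^ (p - 1) = x ^ p / x := by
      rw [Real.rpow_sub h0, Real.rpow_one]
    calc x ^ p - p * x ^ (p - 1) * y = (1 + p * (-y / x)) * x ^ p := by
          rw [hpm1]; field_simp; ring
      _ ≤ (x - y) ^ p := hb2

lemma key_ineq {x y p : ℝ} (hy : 0 ≤ y) (hxy : y ≤ x) (hp : 2 ≤ p) :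
    x ^ p + y ^ p - p * x ^ (p - 1) * y - p * x * y ^ (p - 1) ≤ (x - y) ^ p := by
  have h1 : x ^ p - p * x ^ (p - 1) * y ≤ (x - y) ^ p :=
    key_tangent hy hxy (by linarith)
  have h2 : y ^ p ≤ p * x * y ^ (p - 1) := by
    rcases eq_or_lt_of_le hy with h0 | h0
    · rw [← h0, Real.zero_rpow (by linarith : p ≠ 0),
        Real.zero_rpow (by linarith : p - 1 ≠ 0)]
      simp
    · have hrw : y ^ p = y ^ (p - 1) * y := by
        rw [← Real.rpow_add_one h0.ne' (p - 1)]; ring_nf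
      rw [hrw]
      have hyp : 0 < y ^ (p - 1) := Real.rpow_pos_of_pos h0 _
      have h3 : y ^ (p - 1) * y ≤ x * y ^ (p - 1) := by nlinarith
      have h4 : x * y ^ (p - 1) ≤ p * (x * y ^ (p - 1)) :=
        le_mul_of_one_le_left (mul_nonneg (hy.trans hxy) hyp.le) (by linarith)
      linarith [h3, h4]
  linarith

theorem stmt0 (a b p : ℝ) (hp : 2 ≤ p) :
    |a + b| ^ p ≥ |a| ^ p + |b| ^ p - p * |a| ^ (p - 1) * |b| - p * |a| * |b| ^ (p - 1) := by
  rcases le_total |b| |a| with h | h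
  · have hsub : |a| - |b| ≤ |a + b| := by
      have := abs_sub_abs_le_abs_sub a (-b)
      simp at this
      calc |a| - |b| = |a| - |(-b)| := by rw [abs_neg]
        _ ≤ |a - -b| := abs_sub_abs_le_abs_sub a (-b)
        _ = |a + b| := by ring_nf
    have := key_ineq (abs_nonneg b) h hp
    have hmono : (|a| - |b|) ^ p ≤ |a + b| ^ p :=
      Real.rpow_le_rpow (by linarith [abs_nonneg b]) hsub (by linarith)
    linarith
  · have hsub : |b| - |a| ≤ |a + b| := by
      calc |b| - |a| = |b| - |(-a)| := by rw [abs_neg]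
        _ ≤ |b - -a| := abs_sub_abs_le_abs_sub b (-a)
        _ = |a + b| := by ring_nf
    have := key_ineq (abs_nonneg a) h hp
    have hmono : (|b| - |a|) ^ p ≤ |a + b| ^ p :=
      Real.rpow_le_rpow (by linarith [abs_nonneg a]) hsub (by linarith)
    linarith
end

section
/- Let V∞ > 0, q ≥ 2, 0 < b < 2·√V∞, C > 0, and suppose w : ℝ^N → ℝ satisfies 0 ≤ w(x) ≤ C·exp(-√V∞·|x|) for all x. Then there is a constant C' > 0 such that for all R > 0 and all unit vectors y ∈ ℝ^N, ∫_{ℝ^N} w(x + R·y)^(q-1)·w(x - R·y) dx ≤ C'·exp(-b·R). -/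
open MeasureTheory Real

lemma exp_neg_norm_integrable (N : ℕ) (ε : ℝ) (hε : 0 < ε) :
    Integrable (fun x : EuclideanSpace ℝ (Fin N) => Real.exp (-ε * ‖x‖)) := by
  have hr : (Module.finrank ℝ (EuclideanSpace ℝ (Fin N)) : ℝ) < (N : ℝ) + 1 := by
    simp [finrank_euclideanSpace]
  have hint := integrable_one_add_norm (E := EuclideanSpace ℝ (Fin N)) (μ := volume) hr
  set δ : ℝ := ε / (N + 1) with hδdef
  have hδ : 0 < δ := by positivity
  set M : ℝ := (max 1 δ⁻¹) ^ (N + 1) with hM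
  refine (hint.const_mul M).mono' ?_ ?_
  · exact (Real.continuous_exp.comp ((continuous_const.mul continuous_norm))).aestronglyMeasurable
  · filter_upwards with x
    have ht : (0:ℝ) ≤ ‖x‖ := norm_nonneg x
    set t : ℝ := ‖x‖ with htd
    have hmx1 : (1:ℝ) ≤ max 1 δ⁻¹ := le_max_left _ _
    have h1 : 1 + t ≤ (max 1 δ⁻¹) * Real.exp (δ * t) := by
      have h2 : 1 + δ * t ≤ Real.exp (δ * t) := by
        have := Real.add_one_le_exp (δ * t); linarith
      have h4 : δ⁻¹ ≤ max 1 δ⁻¹ := le_max_right _ _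
      have h5 : 1 + t ≤ (max 1 δ⁻¹) * (1 + δ * t) := by
        have heq : t = δ⁻¹ * (δ * t) := by field_simp
        nlinarith [mul_nonneg hδ.le ht]
      exact h5.trans (mul_le_mul_of_nonneg_left h2 (by linarith))
    have hpow : (1 + t) ^ (N + 1) ≤ M * Real.exp (ε * t) := by
      have hb1 : (0:ℝ) ≤ 1 + t := by linarith
      have h6 := pow_le_pow_left₀ hb1 h1 (N + 1)
      rw [mul_pow, ← Real.exp_nat_mul] at h6
      have hexp : ((N + 1 : ℕ) : ℝ) * (δ * t) = ε * t := by
        push_cast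
        field_simp [hδdef]
        rw [hδdef]; field_simp
      rwa [hexp, ← hM] at h6
    have hppos : (0:ℝ) < (1 + t) ^ (N + 1) := by positivity
    have hepos : (0:ℝ) < Real.exp (ε * t) := Real.exp_pos _
    have hkey : Real.exp (-ε * t) ≤ M * ((1 + t) ^ (N + 1))⁻¹ := by
      rw [neg_mul, Real.exp_neg, ← div_eq_mul_inv, le_div_iff₀ hppos, inv_mul_eq_div,
        div_le_iff₀ hepos]
      nlinarith
    have hrw : (1 + t) ^ (-((N:ℝ) + 1)) = ((1 + t) ^ (N + 1))⁻¹ := by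
      rw [Real.rpow_neg (by linarith)]
      congr 1
      rw [← Real.rpow_natCast (1+t) (N+1)]
      push_cast
      ring_nf
    rw [Real.norm_eq_abs, abs_of_pos (Real.exp_pos _), hrw]
    exact hkey


theorem stmt5 (N : ℕ) (hN : 1 ≤ N) (Vinf q b C : ℝ) (hV : 0 < Vinf) (hq : 2 ≤ q)
    (hb : 0 < b) (hb2 : b < 2 * Real.sqrt Vinf) (hC : 0 < C)
    (w : EuclideanSpace ℝ (Fin N) → ℝ)
    (hw : ∀ x, 0 ≤ w x ∧ w x ≤ C * Real.exp (-Real.sqrt Vinf * ‖x‖)) :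
    ∃ C' > 0, ∀ R > 0, ∀ y : EuclideanSpace ℝ (Fin N), ‖y‖ = 1 →
      (∫ x, w (x + R • y) ^ (q - 1) * w (x - R • y)) ≤ C' * Real.exp (-b * R) := by
  set s := Real.sqrt Vinf with hs
  have hs0 : 0 < s := Real.sqrt_pos.2 hV
  set ε : ℝ := 2 * s - b with hε
  have hε0 : 0 < ε := by simp only [hε]; linarith
  have hInt : Integrable (fun x : EuclideanSpace ℝ (Fin N) => Real.exp (-ε * ‖x‖)) :=
    exp_neg_norm_integrable N ε hε0
  set I := ∫ x : EuclideanSpace ℝ (Fin N), Real.exp (-ε * ‖x‖) with hI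
  have hI0 : 0 ≤ I := integral_nonneg fun x => (Real.exp_pos _).le
  have hCq : 0 < C ^ q := Real.rpow_pos_of_pos hC q
  refine ⟨C ^ q * I + 1, by positivity, ?_⟩
  intro R hR y hy
  have hpt : ∀ x : EuclideanSpace ℝ (Fin N),
      w (x + R • y) ^ (q - 1) * w (x - R • y)
        ≤ (C ^ q * Real.exp (-b * R)) * Real.exp (-ε * ‖x‖) := by
    intro x
    set a := x + R • y with ha
    set c := x - R • y with hc
    obtain ⟨hwa0, hwa⟩ := hw a
    obtain ⟨hwc0, hwc⟩ := hw c
    have hsum2R : 2 * R ≤ ‖a‖ + ‖c‖ := by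
      have : a - c = (2 * R) • y := by
        rw [ha, hc]; module
      have h1 : ‖a - c‖ = 2 * R := by
        rw [this, norm_smul, hy, Real.norm_eq_abs, abs_of_pos (by linarith), mul_one]
      calc 2 * R = ‖a - c‖ := h1.symm
        _ ≤ ‖a‖ + ‖c‖ := norm_sub_le _ _
    have hsum2x : 2 * ‖x‖ ≤ ‖a‖ + ‖c‖ := by
      have : a + c = (2 : ℝ) • x := by rw [ha, hc]; module
      have h1 : ‖a + c‖ = 2 * ‖x‖ := by
        rw [this, norm_smul, Real.norm_eq_abs]; norm_num
      calc 2 * ‖x‖ = ‖a + c‖ := h1.symm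
        _ ≤ ‖a‖ + ‖c‖ := norm_add_le _ _
    have hq1 : (1:ℝ) ≤ q - 1 := by linarith
    -- bound on w a ^ (q-1)
    have h1 : w a ^ (q - 1) ≤ C ^ (q - 1) * Real.exp (-s * ‖a‖) := by
      have hb1 : w a ^ (q - 1) ≤ (C * Real.exp (-s * ‖a‖)) ^ (q - 1) :=
        Real.rpow_le_rpow hwa0 hwa (by linarith)
      have hb2 : (C * Real.exp (-s * ‖a‖)) ^ (q - 1)
          = C ^ (q - 1) * Real.exp (-s * ‖a‖ * (q - 1)) := by
        rw [Real.mul_rpow hC.le (Real.exp_pos _).le, ← Real.exp_mul]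
      have hb3 : Real.exp (-s * ‖a‖ * (q - 1)) ≤ Real.exp (-s * ‖a‖) := by
        apply Real.exp_le_exp.2
        nlinarith [mul_nonneg (mul_nonneg hs0.le (norm_nonneg a)) (show (0:ℝ) ≤ q - 2 by linarith)]
      calc w a ^ (q-1) ≤ C ^ (q-1) * Real.exp (-s * ‖a‖ * (q-1)) := hb1.trans_eq hb2
        _ ≤ C ^ (q-1) * Real.exp (-s * ‖a‖) :=
            mul_le_mul_of_nonneg_left hb3 (Real.rpow_pos_of_pos hC _).le
    have h2 : w a ^ (q - 1) * w c
        ≤ C ^ q * Real.exp (-s * (‖a‖ + ‖c‖)) := by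
      have := mul_le_mul h1 hwc hwc0 (by positivity)
      have hCC : C ^ (q-1) * C = C ^ q := by
        nth_rewrite 2 [← Real.rpow_one C]
        rw [← Real.rpow_add hC]
        norm_num
      calc w a ^ (q-1) * w c ≤ (C ^ (q-1) * Real.exp (-s*‖a‖)) * (C * Real.exp (-s*‖c‖)) := this
        _ = (C ^ (q-1) * C) * (Real.exp (-s*‖a‖) * Real.exp (-s*‖c‖)) := by ring
        _ = (C ^ (q-1) * C) * Real.exp (-s*(‖a‖+‖c‖)) := by rw [← Real.exp_add]; ring_nf
        _ = C ^ q * Real.exp (-s*(‖a‖+‖c‖)) := by rw [hCC]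
    have h3 : Real.exp (-s * (‖a‖ + ‖c‖)) ≤ Real.exp (-b * R) * Real.exp (-ε * ‖x‖) := by
      rw [← Real.exp_add]
      apply Real.exp_le_exp.2
      have hx0 : (0:ℝ) ≤ ‖x‖ := norm_nonneg x
      nlinarith
    calc w a ^ (q-1) * w c ≤ C ^ q * Real.exp (-s*(‖a‖+‖c‖)) := h2
      _ ≤ C ^ q * (Real.exp (-b*R) * Real.exp (-ε*‖x‖)) :=
          mul_le_mul_of_nonneg_left h3 hCq.le
      _ = (C ^ q * Real.exp (-b*R)) * Real.exp (-ε*‖x‖) := by ring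
  have hnn : ∀ x : EuclideanSpace ℝ (Fin N),
      0 ≤ w (x + R • y) ^ (q - 1) * w (x - R • y) := fun x =>
    mul_nonneg (Real.rpow_nonneg (hw _).1 _) (hw _).1
  calc (∫ x, w (x + R • y) ^ (q - 1) * w (x - R • y))
      ≤ ∫ x, (C ^ q * Real.exp (-b * R)) * Real.exp (-ε * ‖x‖) :=
        integral_mono_of_nonneg (Filter.Eventually.of_forall hnn)
          (hInt.const_mul _) (Filter.Eventually.of_forall hpt)
    _ = (C ^ q * Real.exp (-b * R)) * I := by rw [integral_const_mul]
    _ ≤ (C ^ q * I + 1) * Real.exp (-b * R) := by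
        have := Real.exp_pos (-b * R)
        nlinarith
end

section
/- Suppose w : ℝ^N → ℝ is a nonnegative function in L^p with ∫ w^p = 1 (for some real p ≥ 2), and suppose for some b > 0 and all R > 0 and unit vectors y, ∫ w(x+Ry)^(p-1)·w(x-Ry) dx ≤ C'·e^{-bR}. Then the L^p norm of w(·+Ry) - w(·-Ry) satisfies ‖w(·+Ry) - w(·-Ry)‖_p^p ≥ 2 - 2p·C'·e^{-bR}. -/
open MeasureTheory Real

private lemma key_ineq_s7 {p a c : ℝ} (hp : 2 ≤ p) (ha : 0 ≤ a) (hc : 0 ≤ c) :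
    a ^ p + c ^ p - p * a ^ (p - 1) * c - p * a * c ^ (p - 1) ≤ |a - c| ^ p := by
  have hp1 : (1:ℝ) ≤ p := by linarith
  have hp0 : p ≠ 0 := by linarith
  wlog hac : c ≤ a generalizing a c
  · have := this hc ha (le_of_not_ge hac)
    rw [abs_sub_comm]; linarith
  rw [abs_of_nonneg (by linarith)]
  rcases eq_or_lt_of_le ha with h0 | hapos
  · have hc0 : c = 0 := le_antisymm (h0 ▸ hac) hc
    simp [← h0, hc0, Real.zero_rpow hp0]
  have h1 : a ^ p - p * a ^ (p - 1) * c ≤ (a - c) ^ p := by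
    have hs : (-1 : ℝ) ≤ -(c / a) := by
      rw [neg_le_neg_iff]
      exact div_le_one_of_le₀ hac ha
    have hB := one_add_mul_self_le_rpow_one_add hs hp1
    have h2 : (0:ℝ) ≤ 1 + -(c/a) := by
      have := div_le_one_of_le₀ hac ha; linarith
    have h3 := mul_le_mul_of_nonneg_right hB (Real.rpow_nonneg (le_of_lt hapos) p)
    calc a ^ p - p * a ^ (p-1) * c = (1 + p * -(c/a)) * a ^ p := by
          rw [Real.rpow_sub hapos p 1, Real.rpow_one]
          field_simp; ring
      _ ≤ (1 + -(c/a)) ^ p * a ^ p := h3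
      _ = (a - c) ^ p := by
          rw [← Real.mul_rpow h2 ha]
          congr 1
          field_simp; ring
  have h2 : c ^ p ≤ p * a * c ^ (p - 1) := by
    calc c ^ p = c * c ^ (p - 1) := by
          rw [← Real.rpow_one_add' hc (by linarith)]; ring_nf
      _ ≤ a * c ^ (p-1) := by
          exact mul_le_mul_of_nonneg_right hac (Real.rpow_nonneg hc _)
      _ ≤ p * a * c ^ (p-1) := by
          have := Real.rpow_nonneg hc (p-1)
          nlinarith [mul_nonneg (mul_nonneg (by linarith : (0:ℝ) ≤ p - 1) ha) this]
  linarith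

private lemma cross_bound {p a c : ℝ} (hp : 2 ≤ p) (ha : 0 ≤ a) (hc : 0 ≤ c) :
    a ^ (p - 1) * c ≤ a ^ p + c ^ p := by
  have h1 : (0:ℝ) ≤ p - 1 := by linarith
  rcases le_total a c with h | h
  · calc a ^ (p-1) * c ≤ c ^ (p-1) * c :=
          mul_le_mul_of_nonneg_right (Real.rpow_le_rpow ha h h1) hc
      _ = c ^ p := by rw [mul_comm, ← Real.rpow_one_add' hc (by linarith)]; ring_nf
      _ ≤ a ^ p + c ^ p := by nlinarith [Real.rpow_nonneg ha p]
  · calc a ^ (p-1) * c ≤ a ^ (p-1) * a :=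
          mul_le_mul_of_nonneg_left h (Real.rpow_nonneg ha _)
      _ = a ^ p := by rw [mul_comm, ← Real.rpow_one_add' ha (by linarith)]; ring_nf
      _ ≤ a ^ p + c ^ p := by nlinarith [Real.rpow_nonneg hc p]

private lemma diff_bound {p a c : ℝ} (hp : 2 ≤ p) (ha : 0 ≤ a) (hc : 0 ≤ c) :
    |a - c| ^ p ≤ a ^ p + c ^ p := by
  have hp0 : (0:ℝ) ≤ p := by linarith
  rcases le_total a c with h | h
  · calc |a - c| ^ p ≤ c ^ p := by
          apply Real.rpow_le_rpow (abs_nonneg _) _ hp0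
          rw [abs_sub_comm, abs_of_nonneg (by linarith)]; linarith
      _ ≤ a ^ p + c ^ p := by nlinarith [Real.rpow_nonneg ha p]
  · calc |a - c| ^ p ≤ a ^ p := by
          apply Real.rpow_le_rpow (abs_nonneg _) _ hp0
          rw [abs_of_nonneg (by linarith)]; linarith
      _ ≤ a ^ p + c ^ p := by nlinarith [Real.rpow_nonneg hc p]

theorem stmt7 (N : ℕ) (hN : 1 ≤ N) (p b C' : ℝ) (hp : 2 ≤ p) (hb : 0 < b)
    (w : EuclideanSpace ℝ (Fin N) → ℝ) (hw0 : ∀ x, 0 ≤ w x)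
    (hwp : MeasureTheory.Integrable (fun x => w x ^ p))
    (hnorm : (∫ x, w x ^ p) = 1)
    (hcross : ∀ R > 0, ∀ y : EuclideanSpace ℝ (Fin N), ‖y‖ = 1 →
      (∫ x, w (x + R • y) ^ (p - 1) * w (x - R • y)) ≤ C' * Real.exp (-b * R)) :
    ∀ R > 0, ∀ y : EuclideanSpace ℝ (Fin N), ‖y‖ = 1 →
      (∫ x, |w (x + R • y) - w (x - R • y)| ^ p) ≥ 2 - 2 * p * C' * Real.exp (-b * R) := by
  intro R hR y hy
  have hp0 : p ≠ 0 := by linarith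
  set v : EuclideanSpace ℝ (Fin N) := R • y with hv
  -- measurability of w
  have hwm : AEStronglyMeasurable w (volume : Measure (EuclideanSpace ℝ (Fin N))) := by
    have heq : w = fun x => (w x ^ p) ^ p⁻¹ := by
      funext x
      rw [← Real.rpow_mul (hw0 x), mul_inv_cancel₀ hp0, Real.rpow_one]
    rw [heq]
    exact (Real.continuous_rpow_const (by positivity)).comp_aestronglyMeasurable hwp.1
  have hmpa : MeasurePreserving (fun x : EuclideanSpace ℝ (Fin N) => x + v) volume volume :=
    measurePreserving_add_right volume v
  have hmpb : MeasurePreserving (fun x : EuclideanSpace ℝ (Fin N) => x - v) volume volume := by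
    simpa [sub_eq_add_neg] using measurePreserving_add_right
      (volume : Measure (EuclideanSpace ℝ (Fin N))) (-v)
  have haSM : AEStronglyMeasurable (fun x => w (x + v))
      (volume : Measure (EuclideanSpace ℝ (Fin N))) :=
    hwm.comp_quasiMeasurePreserving hmpa.quasiMeasurePreserving
  have hbSM : AEStronglyMeasurable (fun x => w (x - v))
      (volume : Measure (EuclideanSpace ℝ (Fin N))) :=
    hwm.comp_quasiMeasurePreserving hmpb.quasiMeasurePreserving
  have haInt : Integrable (fun x => w (x + v) ^ p) := hwp.comp_add_right v
  have hbInt : Integrable (fun x => w (x - v) ^ p) := hwp.comp_sub_right v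
  have habInt : Integrable (fun x => w (x + v) ^ p + w (x - v) ^ p) := haInt.add hbInt
  have hcont : Continuous (fun t : ℝ => t ^ (p - 1)) :=
    Real.continuous_rpow_const (by linarith)
  have g1SM : AEStronglyMeasurable (fun x => w (x + v) ^ (p - 1) * w (x - v))
      (volume : Measure (EuclideanSpace ℝ (Fin N))) :=
    (hcont.comp_aestronglyMeasurable haSM).mul hbSM
  have g2SM : AEStronglyMeasurable (fun x => w (x + v) * w (x - v) ^ (p - 1))
      (volume : Measure (EuclideanSpace ℝ (Fin N))) :=
    haSM.mul (hcont.comp_aestronglyMeasurable hbSM)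
  have g1Int : Integrable (fun x => w (x + v) ^ (p - 1) * w (x - v)) := by
    apply habInt.mono' g1SM
    filter_upwards with x
    rw [Real.norm_eq_abs, abs_of_nonneg (mul_nonneg (Real.rpow_nonneg (hw0 _) _) (hw0 _))]
    exact cross_bound hp (hw0 _) (hw0 _)
  have g2Int : Integrable (fun x => w (x + v) * w (x - v) ^ (p - 1)) := by
    apply habInt.mono' g2SM
    filter_upwards with x
    rw [Real.norm_eq_abs, abs_of_nonneg (mul_nonneg (hw0 _) (Real.rpow_nonneg (hw0 _) _))]
    calc w (x+v) * w (x-v) ^ (p-1) = w (x-v) ^ (p-1) * w (x+v) := by ring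
      _ ≤ w (x-v) ^ p + w (x+v) ^ p := cross_bound hp (hw0 _) (hw0 _)
      _ = w (x+v) ^ p + w (x-v) ^ p := by ring
  have hInt : Integrable (fun x => |w (x + v) - w (x - v)| ^ p) := by
    apply habInt.mono'
    · exact (Real.continuous_rpow_const (by linarith)).comp_aestronglyMeasurable
        (continuous_abs.comp_aestronglyMeasurable (haSM.sub hbSM))
    · filter_upwards with x
      rw [Real.norm_eq_abs, abs_of_nonneg (Real.rpow_nonneg (abs_nonneg _) _)]
      exact diff_bound hp (hw0 _) (hw0 _)
  -- integrals of translates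
  have hIa : (∫ x, w (x + v) ^ p) = 1 := by
    rw [integral_add_right_eq_self (fun x => w x ^ p) v]; exact hnorm
  have hIb : (∫ x, w (x - v) ^ p) = 1 := by
    rw [integral_sub_right_eq_self (fun x => w x ^ p) v]; exact hnorm
  -- cross bounds
  have hc1 : (∫ x, w (x + v) ^ (p - 1) * w (x - v)) ≤ C' * Real.exp (-b * R) :=
    hcross R hR y hy
  have hc2 : (∫ x, w (x + v) * w (x - v) ^ (p - 1)) ≤ C' * Real.exp (-b * R) := by
    have h := hcross R hR (-y) (by rw [norm_neg, hy])
    have hsmul : R • (-y) = -v := by rw [smul_neg, hv]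
    rw [hsmul] at h
    simp only [← sub_eq_add_neg, sub_neg_eq_add] at h
    calc (∫ x, w (x + v) * w (x - v) ^ (p - 1))
        = ∫ x, w (x - v) ^ (p - 1) * w (x + v) := by
          congr 1; funext x; ring
      _ ≤ C' * Real.exp (-b * R) := h
  -- main pointwise bound and integral_mono
  have hFInt : Integrable (fun x => w (x + v) ^ p + w (x - v) ^ p
      - p * (w (x + v) ^ (p - 1) * w (x - v)) - p * (w (x + v) * w (x - v) ^ (p - 1))) := by
    exact (habInt.sub (g1Int.const_mul p)).sub (g2Int.const_mul p)
  have hmono : (∫ x, w (x + v) ^ p + w (x - v) ^ p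
      - p * (w (x + v) ^ (p - 1) * w (x - v)) - p * (w (x + v) * w (x - v) ^ (p - 1)))
      ≤ ∫ x, |w (x + v) - w (x - v)| ^ p := by
    apply integral_mono hFInt hInt
    intro x
    have := key_ineq_s7 hp (hw0 (x + v)) (hw0 (x - v))
    have e1 := mul_assoc p (w (x + v) ^ (p - 1)) (w (x - v))
    have e2 := mul_assoc p (w (x + v)) (w (x - v) ^ (p - 1))
    beta_reduce
    linarith
  have hsplit : (∫ x, w (x + v) ^ p + w (x - v) ^ p
      - p * (w (x + v) ^ (p - 1) * w (x - v)) - p * (w (x + v) * w (x - v) ^ (p - 1)))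
      = (∫ x, w (x + v) ^ p) + (∫ x, w (x - v) ^ p)
        - p * (∫ x, w (x + v) ^ (p - 1) * w (x - v))
        - p * (∫ x, w (x + v) * w (x - v) ^ (p - 1)) := by
    have hF1 : Integrable (fun x => w (x + v) ^ p + w (x - v) ^ p
        - p * (w (x + v) ^ (p - 1) * w (x - v))) := by
      exact habInt.sub (g1Int.const_mul p)
    rw [integral_sub hF1 (g2Int.const_mul p),
      integral_sub habInt (g1Int.const_mul p), integral_add haInt hbInt,
      integral_const_mul, integral_const_mul]
  have hpp : (0:ℝ) ≤ p := by linarith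
  have hm1 : p * (∫ x, w (x + v) ^ (p - 1) * w (x - v)) ≤ p * (C' * Real.exp (-b * R)) :=
    mul_le_mul_of_nonneg_left hc1 hpp
  have hm2 : p * (∫ x, w (x + v) * w (x - v) ^ (p - 1)) ≤ p * (C' * Real.exp (-b * R)) :=
    mul_le_mul_of_nonneg_left hc2 hpp
  rw [ge_iff_le]
  calc 2 - 2 * p * C' * Real.exp (-b * R)
      = 1 + 1 - p * (C' * Real.exp (-b * R)) - p * (C' * Real.exp (-b * R)) := by ring
    _ ≤ (∫ x, w (x + v) ^ p) + (∫ x, w (x - v) ^ p)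
        - p * (∫ x, w (x + v) ^ (p - 1) * w (x - v))
        - p * (∫ x, w (x + v) * w (x - v) ^ (p - 1)) := by
        rw [hIa, hIb]; linarith
    _ ≤ ∫ x, |w (x + v) - w (x - v)| ^ p := by rw [← hsplit]; exact hmono
end
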